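/- The product ∏_{i=2}^x (1 - 2/p_i) · (p_x^2 + 1)/4 tends to infinity as x → ∞, where p_i is the i-th prime. -/
import Mathlib

open Filter Finset

lemma nth_prime_pos (n : ℕ) : (0:ℝ) < (Nat.nth Nat.Prime n : ℝ) := by
  exact_mod_cast (Nat.prime_nth_prime n).pos

lemma nth_prime_ge_three {n : ℕ} (hn : 1 ≤ n) : 3 ≤ Nat.nth Nat.Prime n := by
  calc 3 = Nat.nth Nat.Prime 1 := Nat.nth_prime_one_eq_three.symm
    _ ≤ Nat.nth Nat.Prime n :=
      (Nat.nth_le_nth Nat.infinite_setOf_prime).2 hn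

lemma succ_prime_gap {n : ℕ} (hn : 1 ≤ n) :
    Nat.nth Nat.Prime n + 2 ≤ Nat.nth Nat.Prime (n + 1) := by
  have h1 : Nat.nth Nat.Prime n < Nat.nth Nat.Prime (n + 1) :=
    (Nat.nth_lt_nth Nat.infinite_setOf_prime).2 (Nat.lt_succ_self n)
  -- both are odd primes
  have hodd1 : Odd (Nat.nth Nat.Prime n) :=
    (Nat.prime_nth_prime n).odd_of_ne_two (by
      have := nth_prime_ge_three hn; omega)
  have hodd2 : Odd (Nat.nth Nat.Prime (n + 1)) :=
    (Nat.prime_nth_prime (n + 1)).odd_of_ne_two (by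
      have := nth_prime_ge_three (show 1 ≤ n + 1 by omega); omega)
  obtain ⟨a, ha⟩ := hodd1
  obtain ⟨b, hb⟩ := hodd2
  omega

lemma key_prod {x : ℕ} (hx : 1 ≤ x) :
    (1 : ℝ) / (Nat.nth Nat.Prime (x - 1) : ℝ) ≤
      ∏ i ∈ Finset.Ico 1 x, (1 - 2 / (Nat.nth Nat.Prime i : ℝ)) := by
  induction x, hx using Nat.le_induction with
  | base =>
      simp [Nat.nth_prime_zero_eq_two]
      norm_num
  | succ n hn ih =>
      have hpn := nth_prime_pos n
      have hfac : (1:ℝ) - 2 / (Nat.nth Nat.Prime n : ℝ)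
          = ((Nat.nth Nat.Prime n : ℝ) - 2) / (Nat.nth Nat.Prime n : ℝ) := by
        field_simp
      rw [Finset.prod_Ico_succ_top (by omega)]
      rcases eq_or_lt_of_le hn with h1 | h2
      · -- n = 1
        subst h1
        simp only [show (2:ℕ) - 1 = 1 from rfl]
        rw [show Finset.Ico 1 1 = ∅ from rfl, Finset.prod_empty, one_mul,
          Nat.nth_prime_one_eq_three]
        norm_num
      · -- n ≥ 2
        have hn1 : 1 ≤ n - 1 := by omega
        have hgap : Nat.nth Nat.Prime (n - 1) + 2 ≤ Nat.nth Nat.Prime n := by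
          have := succ_prime_gap hn1
          rwa [Nat.sub_add_cancel (by omega : 1 ≤ n)] at this
        have hgapR : (Nat.nth Nat.Prime (n - 1) : ℝ) + 2 ≤ (Nat.nth Nat.Prime n : ℝ) := by
          exact_mod_cast hgap
        have hp1 := nth_prime_pos (n - 1)
        simp only [Nat.add_sub_cancel]
        calc (1:ℝ) / (Nat.nth Nat.Prime n : ℝ)
            ≤ (1 / (Nat.nth Nat.Prime (n - 1) : ℝ)) *
              (((Nat.nth Nat.Prime n : ℝ) - 2) / (Nat.nth Nat.Prime n : ℝ)) := by
              rw [div_mul_div_comm, one_mul, div_le_div_iff₀ hpn (by positivity), one_mul]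
              nlinarith
          _ ≤ (∏ i ∈ Finset.Ico 1 n, (1 - 2 / (Nat.nth Nat.Prime i : ℝ))) *
              (1 - 2 / (Nat.nth Nat.Prime n : ℝ)) := by
              rw [hfac]
              apply mul_le_mul_of_nonneg_right ih
              have h3 : (3:ℝ) ≤ (Nat.nth Nat.Prime n : ℝ) := by
                exact_mod_cast nth_prime_ge_three (by omega : 1 ≤ n)
              apply div_nonneg (by linarith) (by linarith)

theorem stmt13 :
    Filter.Tendsto
      (fun x : ℕ =>
        (∏ i ∈ Finset.Ico 1 x, (1 - 2 / (Nat.nth Nat.Prime i : ℝ))) *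
          (((Nat.nth Nat.Prime (x - 1) : ℝ)) ^ 2 + 1) / 4)
      Filter.atTop Filter.atTop := by
  have hlow : Filter.Tendsto (fun x : ℕ => (Nat.nth Nat.Prime (x - 1) : ℝ) / 4)
      Filter.atTop Filter.atTop := by
    apply Tendsto.atTop_div_const (by norm_num)
    apply tendsto_natCast_atTop_atTop.comp
    apply tendsto_atTop_mono (fun x => ?_) (tendsto_sub_atTop_nat 1)
    have := Nat.add_two_le_nth_prime (x - 1)
    omega
  refine tendsto_atTop_mono' Filter.atTop ?_ hlow
  filter_upwards [eventually_ge_atTop 1] with x hx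
  have hp := nth_prime_pos (x - 1)
  have hkey := key_prod hx
  have h1 : (Nat.nth Nat.Prime (x - 1) : ℝ) / 4
      ≤ (1 / (Nat.nth Nat.Prime (x - 1) : ℝ)) *
        (((Nat.nth Nat.Prime (x - 1) : ℝ)) ^ 2 + 1) / 4 := by
    have h2 : (Nat.nth Nat.Prime (x - 1) : ℝ)
        ≤ 1 / (Nat.nth Nat.Prime (x - 1) : ℝ) *
          (((Nat.nth Nat.Prime (x - 1) : ℝ)) ^ 2 + 1) := by
      rw [one_div, inv_mul_eq_div, le_div_iff₀ hp]
      nlinarith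
    linarith
  refine h1.trans ?_
  apply div_le_div_of_nonneg_right ?_ (by norm_num)
  apply mul_le_mul_of_nonneg_right hkey (by positivity)
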